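/- arXiv:1607.01973 — 6 statements merged into one kernel-verified Lean document; each statement's English description precedes it below -/
import Mathlib

section
/- For every homomorphism of hyperrings f : R₁ → R₂, the induced map 𝓕(f) : 𝓕(R₁) → 𝓕(R₂) sending a nonempty subset A ⊆ R₁ to its image f(A) = {f(a) : a ∈ A} is a strong morphism of fuzzy rings. -/
open Set

/-! ### Set-level operations induced by a hyperoperation -/

/-- The sum of two subsets with respect to a hyperaddition. -/
def sAddOf {R : Type*} (add : R → R → Set R) (X Y : Set R) : Set R :=
  ⋃ x ∈ X, ⋃ y ∈ Y, add x y

/-- The hypersum of a list of elements (padded with a final `zero`). -/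
def hypersum {R : Type*} (add : R → R → Set R) (zero : R) (l : List R) : Set R :=
  l.foldr (fun a X => sAddOf add {a} X) {zero}

/-- The collection of all finite (nonempty) hypersums of elements. -/
def sumSet {R : Type*} (add : R → R → Set R) : Set (Set R) :=
  {A | ∃ (a : R) (l : List R), A = l.foldr (fun x X => sAddOf add {x} X) ({a} : Set R)}

/-- The nonempty subsets of a type. -/
abbrev NSet (R : Type*) := {A : Set R // A.Nonempty}

/-- Image of a nonempty subset under a map. -/
def NSet.map {R S : Type*} (f : R → S) (A : NSet R) : NSet S := ⟨f '' A.1, A.2.image f⟩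

/-- Elementwise product of nonempty subsets. -/
def nsMul {R : Type*} (mul : R → R → R) (A B : NSet R) : NSet R :=
  ⟨Set.image2 mul A.1 B.1, A.2.image2 B.2⟩

/-! ### Hyperrings and hyperfields -/

/-- The data `(add, mul, zero, one)` forms a hyperring: `(R, add)` is a canonical
hypergroup, `(R, mul)` is a commutative unital monoid, and multiplication
distributes over hyperaddition with `zero` absorbing. -/
structure IsHyperring {R : Type*} (add : R → R → Set R) (mul : R → R → R)
    (zero one : R) : Prop where
  add_nonempty : ∀ a b, (add a b).Nonempty
  add_comm : ∀ a b, add a b = add b a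
  add_zero : ∀ a, add a zero = {a}
  exists_neg : ∀ a, ∃! b, zero ∈ add a b
  add_assoc : ∀ a b c, sAddOf add (add a b) {c} = sAddOf add {a} (add b c)
  reversible : ∀ a b b' c, zero ∈ add b b' → (a ∈ add b c ↔ c ∈ add a b')
  mul_comm : ∀ a b, mul a b = mul b a
  mul_assoc : ∀ a b c, mul (mul a b) c = mul a (mul b c)
  mul_one : ∀ a, mul a one = a
  mul_zero : ∀ a, mul a zero = zero
  distrib : ∀ a b c, mul a '' add b c = add (mul a b) (mul a c)

/-- The data forms a hyperfield: a hyperring in which every nonzero element is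
a multiplicative unit. -/
structure IsHyperfield {R : Type*} (add : R → R → Set R) (mul : R → R → R)
    (zero one : R) extends IsHyperring add mul zero one : Prop where
  one_ne_zero : one ≠ zero
  inv : ∀ a, a ≠ zero → ∃ b, mul a b = one

/-- A (bundled) hyperring structure on `R`. -/
structure Hyperring (R : Type*) where
  add : R → R → Set R
  mul : R → R → R
  zero : R
  one : R
  isHyperring : IsHyperring add mul zero one

/-- The hyperadditive inverse. -/
noncomputable def Hyperring.neg {R : Type*} (H : Hyperring R) (a : R) : R :=
  (H.isHyperring.exists_neg a).exists.choose

/-- A unit of a hyperring. -/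
def Hyperring.IsUnit {R : Type*} (H : Hyperring R) (a : R) : Prop :=
  ∃ b, H.mul a b = H.one

/-- A (bundled) hyperfield structure on `R`. -/
structure Hyperfield (R : Type*) extends Hyperring R where
  one_ne_zero : one ≠ zero
  inv : ∀ a, a ≠ zero → ∃ b, mul a b = one

/-- A homomorphism of hyperrings (with respect to unbundled data):
`f 0 = 0`, `f 1 = 1`, `f(a+b) ⊆ f a + f b` and `f(a×b) = f a × f b`. -/
structure IsHyperringHom {R S : Type*}
    (addR : R → R → Set R) (mulR : R → R → R) (zeroR oneR : R)
    (addS : S → S → Set S) (mulS : S → S → S) (zeroS oneS : S)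
    (f : R → S) : Prop where
  map_zero : f zeroR = zeroS
  map_one : f oneR = oneS
  map_add : ∀ a b, f '' addR a b ⊆ addS (f a) (f b)
  map_mul : ∀ a b, f (mulR a b) = mulS (f a) (f b)

/-- A strict homomorphism of hyperrings: as above, but `f(a+b) = f a + f b`. -/
structure IsStrictHyperringHom {R S : Type*}
    (addR : R → R → Set R) (mulR : R → R → R) (zeroR oneR : R)
    (addS : S → S → Set S) (mulS : S → S → S) (zeroS oneS : S)
    (f : R → S) : Prop where
  map_zero : f zeroR = zeroS
  map_one : f oneR = oneS
  map_add : ∀ a b, f '' addR a b = addS (f a) (f b)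
  map_mul : ∀ a b, f (mulR a b) = mulS (f a) (f b)

/-! ### Fuzzy rings -/

/-- The data of a fuzzy ring: two binary operations, neutral elements,
a distinguished element `eps` and a set `null` of null elements. -/
structure FuzzyData (K : Type*) where
  add : K → K → K
  mul : K → K → K
  zero : K
  one : K
  eps : K
  null : Set K

namespace FuzzyData

/-- Multiplicative units. -/
def IsUnit {K : Type*} (D : FuzzyData K) (a : K) : Prop := ∃ b, D.mul a b = D.one

/-- Sum of a list of elements. -/
def sum {K : Type*} (D : FuzzyData K) (l : List K) : K := l.foldr D.add D.zero

/-- A fuzzy ring is field-like if for each pair of units `a, b` there exists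
`c ∈ K^× ∪ {0}` with `a + b + c` null. -/
def FieldLike {K : Type*} (D : FuzzyData K) : Prop :=
  ∀ a b, D.IsUnit a → D.IsUnit b →
    ∃ c, (D.IsUnit c ∨ c = D.zero) ∧ D.add (D.add a b) c ∈ D.null

end FuzzyData

/-- Dress's fuzzy ring axioms (FR0)–(FR7). -/
structure IsFuzzyRing {K : Type*} (D : FuzzyData K) : Prop where
  add_comm : ∀ a b, D.add a b = D.add b a
  add_assoc : ∀ a b c, D.add (D.add a b) c = D.add a (D.add b c)
  add_zero : ∀ a, D.add a D.zero = a
  mul_comm : ∀ a b, D.mul a b = D.mul b a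
  mul_assoc : ∀ a b c, D.mul (D.mul a b) c = D.mul a (D.mul b c)
  mul_one : ∀ a, D.mul a D.one = a
  zero_mul : ∀ a, D.mul D.zero a = D.zero
  unit_distrib : ∀ a b c, D.IsUnit a → D.mul a (D.add b c) = D.add (D.mul a b) (D.mul a c)
  eps_sq : D.mul D.eps D.eps = D.one
  null_add : ∀ a ∈ D.null, ∀ b ∈ D.null, D.add a b ∈ D.null
  mul_null : ∀ (a : K), ∀ b ∈ D.null, D.mul a b ∈ D.null
  zero_mem_null : D.zero ∈ D.null
  one_not_mem_null : D.one ∉ D.null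
  fr5 : ∀ a, D.IsUnit a → (D.add D.one a ∈ D.null ↔ a = D.eps)
  fr6 : ∀ a b c d, D.add a b ∈ D.null → D.add c d ∈ D.null →
    D.add (D.mul a c) (D.mul D.eps (D.mul b d)) ∈ D.null
  fr7 : ∀ a b c d, D.add a (D.mul b (D.add c d)) ∈ D.null →
    D.add (D.add a (D.mul b c)) (D.mul b d) ∈ D.null

/-- A weak morphism of fuzzy rings: a map inducing a group homomorphism on units
which preserves null sums of units. -/
structure IsWeakMorphism {K L : Type*} (D : FuzzyData K) (E : FuzzyData L)
    (f : K → L) : Prop where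
  map_unit : ∀ a, D.IsUnit a → E.IsUnit (f a)
  map_one : f D.one = E.one
  map_mul : ∀ a b, D.IsUnit a → D.IsUnit b → f (D.mul a b) = E.mul (f a) (f b)
  map_null : ∀ l : List K, (∀ a ∈ l, D.IsUnit a) →
    D.sum l ∈ D.null → E.sum (l.map f) ∈ E.null

/-- A strong morphism of fuzzy rings. -/
structure IsStrongMorphism {K L : Type*} (D : FuzzyData K) (E : FuzzyData L)
    (f : K → L) : Prop where
  map_one : f D.one = E.one
  map_zero : f D.zero = E.zero
  map_mul : ∀ a b, D.IsUnit a → f (D.mul a b) = E.mul (f a) (f b)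
  map_null : ∀ l : List (K × K),
    D.sum (l.map fun p => D.mul p.1 p.2) ∈ D.null →
    E.sum (l.map fun p => E.mul (f p.1) (f p.2)) ∈ E.null

/-! ### The functor 𝓕 from hyperrings to fuzzy rings -/

/-- The fuzzy-ring data `𝓕(R)` associated to a hyperring `R`: the nonempty
subsets of `R` with subset addition and multiplication, `ε = {-1}`, and null
elements the subsets containing `0`. -/
noncomputable def Hyperring.Fuzzy {R : Type*} (H : Hyperring R) : FuzzyData (NSet R) where
  add A B := ⟨sAddOf H.add A.1 B.1, by
    obtain ⟨a, ha⟩ := A.2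
    obtain ⟨b, hb⟩ := B.2
    obtain ⟨c, hc⟩ := H.isHyperring.add_nonempty a b
    exact ⟨c, Set.mem_biUnion ha (Set.mem_biUnion hb hc)⟩⟩
  mul A B := nsMul H.mul A B
  zero := ⟨{H.zero}, Set.singleton_nonempty _⟩
  one := ⟨{H.one}, Set.singleton_nonempty _⟩
  eps := ⟨{H.neg H.one}, Set.singleton_nonempty _⟩
  null := {A | H.zero ∈ A.1}

/-! ### The functor 𝒢 from field-like fuzzy rings to hyperfields -/

/-- The carrier `K^× ∪ {0}` of `𝒢(K)`. -/
def GCarrier {K : Type*} (D : FuzzyData K) := {a : K // D.IsUnit a ∨ a = D.zero}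

/-- The hyperaddition of `𝒢(K)`: `a ⊕ b = {c : a + b + ε c ∈ K₀}`. -/
def Gadd {K : Type*} (D : FuzzyData K) (a b : GCarrier D) : Set (GCarrier D) :=
  {c | D.add (D.add a.1 b.1) (D.mul D.eps c.1) ∈ D.null}

/-- The zero element of `𝒢(K)`. -/
def Gzero {K : Type*} (D : FuzzyData K) : GCarrier D := ⟨D.zero, Or.inr rfl⟩

/-- The one element of `𝒢(K)`. -/
def Gone {K : Type*} {D : FuzzyData K} (h : IsFuzzyRing D) : GCarrier D :=
  ⟨D.one, Or.inl ⟨D.one, h.mul_one D.one⟩⟩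

/-- The multiplication of `𝒢(K)`. -/
def Gmul {K : Type*} {D : FuzzyData K} (h : IsFuzzyRing D) (a b : GCarrier D) :
    GCarrier D :=
  ⟨D.mul a.1 b.1, by
    rcases b.2 with hb | hb
    · rcases a.2 with ha | ha
      · left
        obtain ⟨a', ha'⟩ := ha
        obtain ⟨b', hb'⟩ := hb
        refine ⟨D.mul a' b', ?_⟩
        rw [h.mul_assoc a.1 b.1 (D.mul a' b'), ← h.mul_assoc b.1 a' b',
          h.mul_comm b.1 a', h.mul_assoc a' b.1 b', hb', h.mul_one, ha']
      · right; rw [ha, h.zero_mul]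
    · right; rw [hb, h.mul_comm, h.zero_mul]⟩

open Classical in
/-- The extension of a weak morphism to `𝒢(K) → 𝒢(L)`, sending `0` to `0`. -/
noncomputable def Gmap {K L : Type*} {D : FuzzyData K} {E : FuzzyData L} {f : K → L}
    (hf : IsWeakMorphism D E f) (a : GCarrier D) : GCarrier E :=
  if h : a.1 = D.zero then Gzero E
  else ⟨f a.1, Or.inl (hf.map_unit a.1 (a.2.resolve_right h))⟩

/-- The canonical map `F → 𝒢(𝓕(F))`, `x ↦ {x}`, for a hyperfield `F`. -/
noncomputable def toG {R : Type*} (F : Hyperfield R) (x : R) :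
    GCarrier F.toHyperring.Fuzzy :=
  ⟨⟨{x}, Set.singleton_nonempty x⟩, by
    by_cases hx : x = F.toHyperring.zero
    · exact Or.inr (by subst hx; rfl)
    · obtain ⟨y, hy⟩ := F.inv x hx
      exact Or.inl ⟨⟨{y}, Set.singleton_nonempty y⟩, by
        apply Subtype.ext
        show Set.image2 F.toHyperring.mul {x} {y} = {F.toHyperring.one}
        rw [Set.image2_singleton, hy]⟩⟩

/-! ### Doubly-distributive hyperfields -/

/-- A hyperfield is doubly-distributive if `(a+b)(c+d) = ac + ad + bc + bd`. -/
def Hyperfield.DoublyDistributive {R : Type*} (F : Hyperfield R) : Prop :=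
  ∀ a b c d : R,
    Set.image2 F.mul (F.add a b) (F.add c d) =
      sAddOf F.add (sAddOf F.add (F.add (F.mul a c) (F.mul a d)) {F.mul b c})
        {F.mul b d}

/-! ### The tropical hyperfield of a totally ordered abelian group, and K_Γ -/

/-- The hyperaddition of the hyperfield `H_Γ` on `Γ ∪ {0}`. -/
def tropAdd (Γ : Type*) [CommGroup Γ] [LinearOrder Γ] [IsOrderedMonoid Γ] (x y : WithZero Γ) :
    Set (WithZero Γ) :=
  if x = y then Set.Iic x else {max x y}

/-- The underlying set of the fuzzy ring `K_Γ`: all singletons and all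
intervals `[0, a]` in `Γ ∪ {0}`. -/
def KgSet (Γ : Type*) [CommGroup Γ] [LinearOrder Γ] [IsOrderedMonoid Γ] : Set (Set (WithZero Γ)) :=
  {A | (∃ a : WithZero Γ, A = {a}) ∨ ∃ a : WithZero Γ, A = Set.Iic a}

open Classical in
/-- The casewise addition of `K_Γ`. -/
noncomputable def KgAdd (Γ : Type*) [CommGroup Γ] [LinearOrder Γ] [IsOrderedMonoid Γ]
    (A B : Set (WithZero Γ)) : Set (WithZero Γ) :=
  if h : ∃ a b : WithZero Γ, A = {a} ∧ B = {b} then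
    if h.choose = h.choose_spec.choose then Set.Iic h.choose
    else {max h.choose h.choose_spec.choose}
  else if h : ∃ a b : WithZero Γ, A = {a} ∧ B = Set.Iic b then
    if h.choose ≤ h.choose_spec.choose then Set.Iic h.choose_spec.choose
    else {h.choose}
  else if h : ∃ a b : WithZero Γ, A = Set.Iic a ∧ B = {b} then
    if h.choose_spec.choose ≤ h.choose then Set.Iic h.choose
    else {h.choose_spec.choose}
  else if h : ∃ a b : WithZero Γ, A = Set.Iic a ∧ B = Set.Iic b then
    Set.Iic (max h.choose h.choose_spec.choose)
  else ∅

/-- The carrier of `K_Γ` as a subtype. -/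
def Kg (Γ : Type*) [CommGroup Γ] [LinearOrder Γ] [IsOrderedMonoid Γ] := {A : Set (WithZero Γ) // A ∈ KgSet Γ}

/-- The inclusion `K_Γ → 𝓕(H_Γ)`. -/
noncomputable def KgToF (Γ : Type*) [CommGroup Γ] [LinearOrder Γ] [IsOrderedMonoid Γ] (A : Kg Γ) : NSet (WithZero Γ) :=
  ⟨A.1, by
    rcases A.2 with ⟨a, h⟩ | ⟨a, h⟩
    · rw [h]; exact Set.singleton_nonempty a
    · rw [h]; exact ⟨a, Set.mem_Iic.2 le_rfl⟩⟩

/-! ### Grassmann–Plücker functions -/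

/-- A Grassmann–Plücker function of rank `r+1` on `E` with coefficients in a
hyperfield `F`. -/
noncomputable def IsGPHyper {R E : Type*} [Fintype E] (F : Hyperfield R) (r : ℕ)
    (φ : (Fin (r + 1) → E) → R) : Prop :=
  (∃ x, φ x ≠ F.zero) ∧
  (∀ x : Fin (r + 1) → E, ∀ i j : Fin (r + 1), i ≠ j → x i = x j → φ x = F.zero) ∧
  (∀ (x : Fin (r + 1) → E) (σ : Equiv.Perm (Fin (r + 1))), Equiv.Perm.sign σ = -1 →
    φ (x ∘ σ) = F.toHyperring.neg (φ x)) ∧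
  (∀ (x : Fin (r + 2) → E) (y : Fin r → E),
    F.zero ∈ hypersum F.add F.zero
      ((List.finRange (r + 2)).map fun (k : Fin (r + 2)) =>
        if Even (k : ℕ)
        then F.toHyperring.neg (F.mul (φ (x ∘ k.succAbove)) (φ (Fin.cons (x k) y)))
        else F.mul (φ (x ∘ k.succAbove)) (φ (Fin.cons (x k) y))))

/-- A Grassmann–Plücker function of rank `r+1` on `E` with coefficients in a
fuzzy ring (given by its data `D`). -/
def IsGPFuzzy {K E : Type*} [Fintype E] (D : FuzzyData K) (r : ℕ)
    (φ : (Fin (r + 1) → E) → K) : Prop :=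
  (∀ x, D.IsUnit (φ x) ∨ φ x = D.zero) ∧
  (∃ x, φ x ≠ D.zero) ∧
  (∀ x : Fin (r + 1) → E, ∀ i j : Fin (r + 1), i ≠ j → x i = x j → φ x = D.zero) ∧
  (∀ (x : Fin (r + 1) → E) (σ : Equiv.Perm (Fin (r + 1))), Equiv.Perm.sign σ = -1 →
    φ (x ∘ σ) = D.mul D.eps (φ x)) ∧
  (∀ (x : Fin (r + 2) → E) (y : Fin r → E),
    D.sum ((List.finRange (r + 2)).map fun (k : Fin (r + 2)) =>
      if Even (k : ℕ)
      then D.mul D.eps (D.mul (φ (x ∘ k.succAbove)) (φ (Fin.cons (x k) y)))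
      else D.mul (φ (x ∘ k.succAbove)) (φ (Fin.cons (x k) y))) ∈ D.null)

/-- For every homomorphism of hyperrings `f : R₁ → R₂`, the induced
map `𝓕(f) : 𝓕(R₁) → 𝓕(R₂)`, `A ↦ f(A)`, is a strong morphism of fuzzy rings. -/
theorem fuzzy_map_isStrongMorphism {R₁ R₂ : Type*}
    (H₁ : Hyperring R₁) (H₂ : Hyperring R₂) (f : R₁ → R₂)
    (hf : IsHyperringHom H₁.add H₁.mul H₁.zero H₁.one
      H₂.add H₂.mul H₂.zero H₂.one f) :
    IsStrongMorphism H₁.Fuzzy H₂.Fuzzy (NSet.map f) := by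
  have hadd : ∀ X Y : Set R₁, f '' sAddOf H₁.add X Y ⊆ sAddOf H₂.add (f '' X) (f '' Y) := by
    rintro X Y _ ⟨z, hz, rfl⟩
    simp only [sAddOf, Set.mem_iUnion] at hz ⊢
    obtain ⟨x, hx, y, hy, hz⟩ := hz
    exact ⟨f x, ⟨x, hx, rfl⟩, f y, ⟨y, hy, rfl⟩, hf.map_add x y ⟨z, hz, rfl⟩⟩
  have hmul : ∀ A B : NSet R₁, NSet.map f (nsMul H₁.mul A B)
      = nsMul H₂.mul (NSet.map f A) (NSet.map f B) := by
    intro A B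
    apply Subtype.ext
    show f '' Set.image2 H₁.mul A.1 B.1 = Set.image2 H₂.mul (f '' A.1) (f '' B.1)
    rw [Set.image_image2, Set.image2_image_left, Set.image2_image_right]
    exact Set.image2_congr fun a _ b _ => hf.map_mul a b
  constructor
  · exact Subtype.ext (by show f '' {H₁.one} = {H₂.one}; simp [hf.map_one])
  · exact Subtype.ext (by show f '' {H₁.zero} = {H₂.zero}; simp [hf.map_zero])
  · exact fun a b _ => hmul a b
  · intro l hl
    have key : ∀ L : List (NSet R₁),
        f '' (H₁.Fuzzy.sum L).1 ⊆ (H₂.Fuzzy.sum (L.map (NSet.map f))).1 := by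
      intro L
      induction L with
      | nil => simp only [FuzzyData.sum, List.foldr, List.map_nil]
               show f '' {H₁.zero} ⊆ {H₂.zero}; simp [hf.map_zero]
      | cons A L ih =>
        refine (hadd _ _).trans ?_
        show sAddOf H₂.add (f '' A.1) _ ⊆ _
        intro z hz
        simp only [sAddOf, Set.mem_iUnion, exists_prop] at hz
        obtain ⟨x, hx, y, hy, hz⟩ := hz
        show z ∈ sAddOf H₂.add _ _
        exact Set.mem_biUnion hx (Set.mem_biUnion (ih hy) hz)
    have h0 : H₂.zero ∈ f '' (H₁.Fuzzy.sum (l.map fun p => H₁.Fuzzy.mul p.1 p.2)).1 :=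
      ⟨H₁.zero, hl, hf.map_zero⟩
    have := key _ h0
    have heq : (l.map fun p => H₁.Fuzzy.mul p.1 p.2).map (NSet.map f)
        = l.map fun p => H₂.Fuzzy.mul (NSet.map f p.1) (NSet.map f p.2) := by
      rw [List.map_map]
      exact List.map_congr_left fun p _ => hmul p.1 p.2
    rw [heq] at this
    exact this
end

section
/- For every hyperfield F, the fuzzy ring 𝓕(F) is field-like: for every pair of units A, B of 𝓕(F) there exists C ∈ 𝓕(F)^× ∪ {0} with A + B + C ∈ 𝓕(F)₀. -/
open Set

/-- For every hyperfield `F`, the fuzzy ring `𝓕(F)` is field-like: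
for all units `A, B` of `𝓕(F)` there exists `C ∈ 𝓕(F)^× ∪ {0}` with `A + B + C` null. -/
theorem fuzzy_of_hyperfield_fieldLike {R : Type*} (F : Hyperfield R) :
    F.toHyperring.Fuzzy.FieldLike := by
  intro A B _ _
  obtain ⟨a, ha⟩ := A.2
  obtain ⟨b, hb⟩ := B.2
  obtain ⟨d, hd⟩ := F.isHyperring.add_nonempty a b
  have hdm : d ∈ sAddOf F.add A.1 B.1 :=
    Set.mem_biUnion ha (Set.mem_biUnion hb hd)
  by_cases hd0 : d = F.zero
  · refine ⟨F.toHyperring.Fuzzy.zero, Or.inr rfl, ?_⟩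
    show F.zero ∈ sAddOf F.add (sAddOf F.add A.1 B.1) {F.zero}
    refine Set.mem_biUnion hdm (Set.mem_biUnion rfl ?_)
    rw [F.isHyperring.add_zero d]
    exact hd0.symm
  · set c := F.toHyperring.neg d with hcdef
    have hc : F.zero ∈ F.add d c := (F.isHyperring.exists_neg d).exists.choose_spec
    have hc0 : c ≠ F.zero := by
      intro h
      rw [h, F.isHyperring.add_zero] at hc
      exact hd0 hc.symm
    obtain ⟨c', hc'⟩ := F.inv c hc0
    refine ⟨⟨{c}, Set.singleton_nonempty c⟩,
      Or.inl ⟨⟨{c'}, Set.singleton_nonempty c'⟩, ?_⟩, ?_⟩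
    · apply Subtype.ext
      show Set.image2 F.mul {c} {c'} = {F.one}
      rw [Set.image2_singleton, hc']
    · show F.zero ∈ sAddOf F.add (sAddOf F.add A.1 B.1) {c}
      exact Set.mem_biUnion hdm (Set.mem_biUnion rfl hc)
end

section
/- For every hyperfield F, the map x ↦ {x} is an isomorphism of hyperfields from F to 𝒢(𝓕(F)): it is a multiplicative bijection from F onto 𝓕(F)^× ∪ {0} sending 0 to {0} and 1 to {1}, and for all a,b,c ∈ F one has c ∈ a + b in F if and only if {c} ∈ {a} ⊕ {b} in 𝒢(𝓕(F)). -/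
open Set

/-- For every hyperfield `F`, the map `x ↦ {x}` is an isomorphism of
hyperfields `F ≅ 𝒢(𝓕(F))`: a multiplicative bijection onto `𝓕(F)^× ∪ {0}` sending `0`
to `{0}` and `1` to `{1}`, with `c ∈ a + b` iff `{c} ∈ {a} ⊕ {b}`. -/
theorem toG_isIso {R : Type*} (F : Hyperfield R) :
    Function.Bijective (toG F) ∧
    (toG F F.zero).1 = F.toHyperring.Fuzzy.zero ∧
    (toG F F.one).1 = F.toHyperring.Fuzzy.one ∧
    (∀ a b : R, (toG F (F.mul a b)).1 =
      F.toHyperring.Fuzzy.mul (toG F a).1 (toG F b).1) ∧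
    (∀ a b c : R,
      c ∈ F.add a b ↔ toG F c ∈ Gadd F.toHyperring.Fuzzy (toG F a) (toG F b)) := by

  have hn : F.zero ∈ F.add F.one (F.toHyperring.neg F.one) :=
    (F.isHyperring.exists_neg F.one).exists.choose_spec
  have key : ∀ c : R, F.zero ∈ F.add c (F.mul (F.toHyperring.neg F.one) c) := by
    intro c
    have hd := F.isHyperring.distrib c F.one (F.toHyperring.neg F.one)
    have h0 : F.mul c F.zero ∈ F.mul c '' F.add F.one (F.toHyperring.neg F.one) :=
      Set.mem_image_of_mem _ hn
    rw [hd, F.isHyperring.mul_zero, F.isHyperring.mul_one] at h0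
    rwa [F.isHyperring.mul_comm]
  refine ⟨⟨?_, ?_⟩, rfl, rfl, ?_, ?_⟩
  · intro x y h
    have h' : ({x} : Set R) = {y} := congrArg (fun A => A.1.1) h
    exact Set.singleton_eq_singleton_iff.mp h'
  · rintro ⟨A, hA | hA⟩
    · obtain ⟨B, hB⟩ := hA
      have hB' : Set.image2 F.mul A.1 B.1 = {F.one} := congrArg Subtype.val hB
      obtain ⟨a, ha⟩ := A.2
      obtain ⟨b, hb⟩ := B.2
      have hab : F.mul a b = F.one := by
        have h1 := Set.mem_image2_of_mem (f := F.mul) ha hb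
        rw [hB'] at h1; exact h1
      refine ⟨a, ?_⟩
      apply Subtype.ext; apply Subtype.ext
      show ({a} : Set R) = A.1
      symm
      apply Set.eq_singleton_iff_unique_mem.mpr
      refine ⟨ha, fun a' ha' => ?_⟩
      have hab' : F.mul a' b = F.one := by
        have h1 := Set.mem_image2_of_mem (f := F.mul) ha' hb
        rw [hB'] at h1; exact h1
      calc a' = F.mul (F.mul a b) a' := by
              rw [hab, F.isHyperring.mul_comm, F.isHyperring.mul_one]
        _ = F.mul a (F.mul a' b) := by
              rw [F.isHyperring.mul_assoc, F.isHyperring.mul_comm b a']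
        _ = a := by rw [hab', F.isHyperring.mul_one]
    · refine ⟨F.zero, ?_⟩
      subst hA
      rfl
  · intro a b
    apply Subtype.ext
    show ({F.mul a b} : Set R) = Set.image2 F.mul {a} {b}
    rw [Set.image2_singleton]
  · intro a b c
    have hshow : (toG F c ∈ Gadd F.toHyperring.Fuzzy (toG F a) (toG F b)) ↔
        F.zero ∈ sAddOf F.add (sAddOf F.add {a} {b})
          (Set.image2 F.mul {F.toHyperring.neg F.one} {c}) := Iff.rfl
    rw [hshow, Set.image2_singleton]
    have hab : sAddOf F.add ({a} : Set R) {b} = F.add a b := by simp [sAddOf]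
    rw [hab]
    set m := F.mul (F.toHyperring.neg F.one) c with hm
    constructor
    · intro hc
      exact Set.mem_biUnion hc (Set.mem_biUnion rfl (key c))
    · intro h0
      simp only [sAddOf, Set.mem_iUnion, Set.mem_singleton_iff, exists_prop] at h0
      obtain ⟨x, hx, y, hy, hxy⟩ := h0
      subst hy
      have hx0 : F.zero ∈ F.add m x := by rwa [F.isHyperring.add_comm] at hxy
      have hc0 : F.zero ∈ F.add m c := by
        have := key c; rwa [F.isHyperring.add_comm] at this
      have : x = c := (F.isHyperring.exists_neg m).unique hx0 hc0
      rwa [this] at hx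
end

section
/- Let Γ be a totally ordered abelian group. The inclusion map i : K_Γ → 𝓕(H_Γ), sending each element of K_Γ (a singleton or an interval [0,a] in Γ ∪ {0}) to itself viewed as a nonempty subset of H_Γ, is an injective strong morphism of fuzzy rings; hence K_Γ is a sub-fuzzy ring of 𝓕(H_Γ). -/
open Set

section KgAux

variable {Γ : Type*} [CommGroup Γ] [LinearOrder Γ] [IsOrderedMonoid Γ]

lemma tropAdd_le' {x y z : WithZero Γ} (hz : z ∈ tropAdd Γ x y) : z ≤ max x y := by
  unfold tropAdd at hz
  split_ifs at hz with h
  · exact le_trans hz (le_max_left _ _)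
  · rw [Set.mem_singleton_iff] at hz; exact hz.le

lemma mem_tropAdd_left' {x y : WithZero Γ} (h : y ≤ x) : x ∈ tropAdd Γ x y := by
  unfold tropAdd
  split_ifs with he
  · exact Set.mem_Iic.2 le_rfl
  · simp [max_eq_left h]

lemma mem_tropAdd_right' {x y : WithZero Γ} (h : x ≤ y) : y ∈ tropAdd Γ x y := by
  unfold tropAdd
  split_ifs with he
  · subst he; exact Set.mem_Iic.2 le_rfl
  · simp [max_eq_right h]

lemma mem_tropAdd_self {x z : WithZero Γ} (h : z ≤ x) : z ∈ tropAdd Γ x x := by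
  unfold tropAdd; simp [h]

lemma mem_sAddOf {R : Type*} {add : R → R → Set R} {X Y : Set R} {z : R} :
    z ∈ sAddOf add X Y ↔ ∃ x ∈ X, ∃ y ∈ Y, z ∈ add x y := by
  simp [sAddOf]

lemma sAdd_singleton_singleton (a b : WithZero Γ) :
    sAddOf (tropAdd Γ) {a} {b} = tropAdd Γ a b := by
  ext z; simp [mem_sAddOf]

lemma sAdd_singleton_Iic (a b : WithZero Γ) :
    sAddOf (tropAdd Γ) {a} (Set.Iic b) = if a ≤ b then Set.Iic b else {a} := by
  ext z
  rw [mem_sAddOf]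
  split_ifs with hab
  · constructor
    · rintro ⟨x, hx, y, hy, hz⟩
      rw [Set.mem_singleton_iff] at hx
      rw [hx] at hz
      exact Set.mem_Iic.2 (le_trans (tropAdd_le' hz) (max_le hab hy))
    · intro hz
      rw [Set.mem_Iic] at hz
      by_cases hza : z ≤ a
      · exact ⟨a, rfl, a, Set.mem_Iic.2 hab, mem_tropAdd_self hza⟩
      · exact ⟨a, rfl, z, Set.mem_Iic.2 hz, mem_tropAdd_right' (not_le.1 hza).le⟩
  · constructor
    · rintro ⟨x, hx, y, hy, hz⟩
      rw [Set.mem_singleton_iff] at hx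
      rw [hx] at hz
      rw [Set.mem_Iic] at hy
      have hya : y < a := lt_of_le_of_lt hy (not_le.1 hab)
      unfold tropAdd at hz
      rw [if_neg (by exact fun h => absurd h.symm hya.ne)] at hz
      rw [Set.mem_singleton_iff] at hz ⊢
      rw [hz, max_eq_left hya.le]
    · rintro rfl
      exact ⟨z, rfl, b, Set.mem_Iic.2 le_rfl, mem_tropAdd_left' (not_le.1 hab).le⟩

lemma tropAdd_comm' (x y : WithZero Γ) : tropAdd Γ x y = tropAdd Γ y x := by
  unfold tropAdd
  by_cases h : x = y
  · subst h; simp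
  · rw [if_neg h, if_neg (fun h' => h h'.symm), max_comm]

lemma sAddOf_tropAdd_comm (A B : Set (WithZero Γ)) :
    sAddOf (tropAdd Γ) A B = sAddOf (tropAdd Γ) B A := by
  ext z
  rw [mem_sAddOf, mem_sAddOf]
  constructor
  · rintro ⟨x, hx, y, hy, hz⟩; exact ⟨y, hy, x, hx, by rwa [tropAdd_comm']⟩
  · rintro ⟨x, hx, y, hy, hz⟩; exact ⟨y, hy, x, hx, by rwa [tropAdd_comm']⟩

lemma sAdd_Iic_singleton (a b : WithZero Γ) :
    sAddOf (tropAdd Γ) (Set.Iic a) {b} = if b ≤ a then Set.Iic a else {b} := by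
  rw [sAddOf_tropAdd_comm, sAdd_singleton_Iic]

lemma sAdd_Iic_Iic (a b : WithZero Γ) :
    sAddOf (tropAdd Γ) (Set.Iic a) (Set.Iic b) = Set.Iic (max a b) := by
  ext z
  rw [mem_sAddOf, Set.mem_Iic]
  constructor
  · rintro ⟨x, hx, y, hy, hz⟩
    rw [Set.mem_Iic] at hx hy
    exact le_trans (tropAdd_le' hz) (max_le_max hx hy)
  · intro hz
    rcases le_total a b with hab | hab
    · rw [max_eq_right hab] at hz
      by_cases hza : z ≤ a
      · exact ⟨z, Set.mem_Iic.2 hza, z, Set.mem_Iic.2 (le_trans hza hab),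
          mem_tropAdd_self le_rfl⟩
      · exact ⟨a, Set.mem_Iic.2 le_rfl, z, Set.mem_Iic.2 hz,
          mem_tropAdd_right' (not_le.1 hza).le⟩
    · rw [max_eq_left hab] at hz
      by_cases hzb : z ≤ b
      · exact ⟨z, Set.mem_Iic.2 (le_trans hzb hab), z, Set.mem_Iic.2 hzb,
          mem_tropAdd_self le_rfl⟩
      · exact ⟨z, Set.mem_Iic.2 hz, b, Set.mem_Iic.2 le_rfl,
          mem_tropAdd_left' (not_le.1 hzb).le⟩

lemma mul_singleton_Iic (a b : WithZero Γ) :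
    Set.image2 (· * ·) ({a} : Set (WithZero Γ)) (Set.Iic b) = Set.Iic (a * b) := by
  ext z
  simp only [Set.image2_singleton_left, Set.mem_image, Set.mem_Iic]
  constructor
  · rintro ⟨y, hy, rfl⟩; exact mul_le_mul_right hy a
  · intro hz
    by_cases ha : a = 0
    · subst ha
      rw [zero_mul, le_zero_iff] at hz
      exact ⟨b, le_rfl, by rw [zero_mul, hz]⟩
    · refine ⟨a⁻¹ * z, ?_, mul_inv_cancel_left₀ ha z⟩
      calc a⁻¹ * z ≤ a⁻¹ * (a * b) := mul_le_mul_right hz a⁻¹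
        _ = b := inv_mul_cancel_left₀ ha b

lemma mul_Iic_singleton (a b : WithZero Γ) :
    Set.image2 (· * ·) (Set.Iic a) ({b} : Set (WithZero Γ)) = Set.Iic (a * b) := by
  rw [Set.image2_swap]
  have : (fun (x y : WithZero Γ) => y * x) = (fun (x y : WithZero Γ) => x * y) := by
    funext x y; exact mul_comm y x
  rw [this, mul_singleton_Iic, mul_comm]

lemma mul_Iic_Iic (a b : WithZero Γ) :
    Set.image2 (· * ·) (Set.Iic a) (Set.Iic b) = Set.Iic (a * b) := by
  ext z
  simp only [Set.mem_image2, Set.mem_Iic]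
  constructor
  · rintro ⟨x, hx, y, hy, rfl⟩; exact mul_le_mul' hx hy
  · intro hz
    by_cases ha : a = 0
    · subst ha
      rw [zero_mul, le_zero_iff] at hz
      exact ⟨0, le_rfl, b, le_rfl, by rw [zero_mul, hz]⟩
    · refine ⟨a, le_rfl, a⁻¹ * z, ?_, mul_inv_cancel_left₀ ha z⟩
      calc a⁻¹ * z ≤ a⁻¹ * (a * b) := mul_le_mul_right hz a⁻¹
        _ = b := inv_mul_cancel_left₀ ha b

lemma Kg_mul_mem {A B : Set (WithZero Γ)} (hA : A ∈ KgSet Γ) (hB : B ∈ KgSet Γ) :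
    Set.image2 (· * ·) A B ∈ KgSet Γ := by
  rcases hA with ⟨a, rfl⟩ | ⟨a, rfl⟩ <;> rcases hB with ⟨b, rfl⟩ | ⟨b, rfl⟩
  · exact Or.inl ⟨a * b, by rw [Set.image2_singleton]⟩
  · exact Or.inr ⟨a * b, mul_singleton_Iic a b⟩
  · exact Or.inr ⟨a * b, mul_Iic_singleton a b⟩
  · exact Or.inr ⟨a * b, mul_Iic_Iic a b⟩

lemma Kg_sAdd_mem {A B : Set (WithZero Γ)} (hA : A ∈ KgSet Γ) (hB : B ∈ KgSet Γ) :
    sAddOf (tropAdd Γ) A B ∈ KgSet Γ := by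
  rcases hA with ⟨a, rfl⟩ | ⟨a, rfl⟩ <;> rcases hB with ⟨b, rfl⟩ | ⟨b, rfl⟩
  · rw [sAdd_singleton_singleton]
    unfold tropAdd
    split_ifs
    · exact Or.inr ⟨a, rfl⟩
    · exact Or.inl ⟨max a b, rfl⟩
  · rw [sAdd_singleton_Iic]; split_ifs
    · exact Or.inr ⟨b, rfl⟩
    · exact Or.inl ⟨a, rfl⟩
  · rw [sAdd_Iic_singleton]; split_ifs
    · exact Or.inr ⟨a, rfl⟩
    · exact Or.inl ⟨b, rfl⟩
  · rw [sAdd_Iic_Iic]; exact Or.inr ⟨max a b, rfl⟩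

lemma KgAdd_eq_sAdd {A B : Set (WithZero Γ)} (hA : A ∈ KgSet Γ) (hB : B ∈ KgSet Γ) :
    KgAdd Γ A B = sAddOf (tropAdd Γ) A B := by
  unfold KgAdd
  by_cases h1 : ∃ a b : WithZero Γ, A = {a} ∧ B = {b}
  · rw [dif_pos h1]
    obtain ⟨a, b, hA', hB'⟩ := id h1
    have ea : h1.choose = a :=
      Set.singleton_injective (h1.choose_spec.choose_spec.1.symm.trans hA')
    have eb : h1.choose_spec.choose = b :=
      Set.singleton_injective (h1.choose_spec.choose_spec.2.symm.trans hB')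
    rw [eb, ea, hA', hB', sAdd_singleton_singleton]
    unfold tropAdd
    split_ifs <;> rfl
  rw [dif_neg h1]
  by_cases h2 : ∃ a b : WithZero Γ, A = {a} ∧ B = Set.Iic b
  · rw [dif_pos h2]
    obtain ⟨a, b, hA', hB'⟩ := id h2
    have ea : h2.choose = a :=
      Set.singleton_injective (h2.choose_spec.choose_spec.1.symm.trans hA')
    have eb : h2.choose_spec.choose = b :=
      Set.Iic_injective (h2.choose_spec.choose_spec.2.symm.trans hB')
    rw [eb, ea, hA', hB', sAdd_singleton_Iic]
  rw [dif_neg h2]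
  by_cases h3 : ∃ a b : WithZero Γ, A = Set.Iic a ∧ B = {b}
  · rw [dif_pos h3]
    obtain ⟨a, b, hA', hB'⟩ := id h3
    have ea : h3.choose = a :=
      Set.Iic_injective (h3.choose_spec.choose_spec.1.symm.trans hA')
    have eb : h3.choose_spec.choose = b :=
      Set.singleton_injective (h3.choose_spec.choose_spec.2.symm.trans hB')
    rw [eb, ea, hA', hB', sAdd_Iic_singleton]
  rw [dif_neg h3]
  by_cases h4 : ∃ a b : WithZero Γ, A = Set.Iic a ∧ B = Set.Iic b
  · rw [dif_pos h4]
    obtain ⟨a, b, hA', hB'⟩ := id h4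
    have ea : h4.choose = a :=
      Set.Iic_injective (h4.choose_spec.choose_spec.1.symm.trans hA')
    have eb : h4.choose_spec.choose = b :=
      Set.Iic_injective (h4.choose_spec.choose_spec.2.symm.trans hB')
    rw [eb, ea, hA', hB', sAdd_Iic_Iic]
  exfalso
  rcases hA with ⟨a, rfl⟩ | ⟨a, rfl⟩ <;> rcases hB with ⟨b, rfl⟩ | ⟨b, rfl⟩
  · exact h1 ⟨a, b, rfl, rfl⟩
  · exact h2 ⟨a, b, rfl, rfl⟩
  · exact h3 ⟨a, b, rfl, rfl⟩
  · exact h4 ⟨a, b, rfl, rfl⟩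

lemma Kg_foldr_eq (l : List (Kg Γ × Kg Γ)) :
    l.foldr (fun p X => KgAdd Γ (Set.image2 (· * ·) p.1.1 p.2.1) X) {(0 : WithZero Γ)}
      = l.foldr (fun p X => sAddOf (tropAdd Γ) (Set.image2 (· * ·) p.1.1 p.2.1) X)
          {(0 : WithZero Γ)}
    ∧ l.foldr (fun p X => sAddOf (tropAdd Γ) (Set.image2 (· * ·) p.1.1 p.2.1) X)
        {(0 : WithZero Γ)} ∈ KgSet Γ := by
  induction l with
  | nil => exact ⟨rfl, Or.inl ⟨0, rfl⟩⟩
  | cons p t ih =>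
    have hp := Kg_mul_mem p.1.2 p.2.2
    refine ⟨?_, Kg_sAdd_mem hp ih.2⟩
    simp only [List.foldr_cons]
    rw [ih.1, KgAdd_eq_sAdd hp ih.2]

end KgAux

/-- For a totally ordered abelian group `Γ`, the inclusion
`i : K_Γ → 𝓕(H_Γ)` is an injective strong morphism of fuzzy rings: the carrier of
`K_Γ` (singletons and intervals `[0,a]`) is closed under the `K_Γ`-operations, the
`K_Γ`-addition agrees with the subset addition of `𝓕(H_Γ)`, the inclusion is
injective, preserves `0` and `1`, and carries null sums of products to null sums of
products; hence `K_Γ` is a sub-fuzzy ring of `𝓕(H_Γ)`. -/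
theorem KGamma_sub_fuzzyRing (Γ : Type*) [CommGroup Γ] [LinearOrder Γ] [IsOrderedMonoid Γ] :
    (∀ A ∈ KgSet Γ, ∀ B ∈ KgSet Γ,
      KgAdd Γ A B ∈ KgSet Γ ∧ Set.image2 (· * ·) A B ∈ KgSet Γ) ∧
    (∀ A ∈ KgSet Γ, ∀ B ∈ KgSet Γ, KgAdd Γ A B = sAddOf (tropAdd Γ) A B) ∧
    Function.Injective (KgToF Γ) ∧
    (KgToF Γ ⟨{(1 : WithZero Γ)}, Or.inl ⟨1, rfl⟩⟩).1 = {(1 : WithZero Γ)} ∧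
    (KgToF Γ ⟨{(0 : WithZero Γ)}, Or.inl ⟨0, rfl⟩⟩).1 = {(0 : WithZero Γ)} ∧
    (∀ l : List (Kg Γ × Kg Γ),
      (0 : WithZero Γ) ∈
        l.foldr (fun p X => KgAdd Γ (Set.image2 (· * ·) p.1.1 p.2.1) X)
          {(0 : WithZero Γ)} →
      (0 : WithZero Γ) ∈
        l.foldr (fun p X => sAddOf (tropAdd Γ) (Set.image2 (· * ·) p.1.1 p.2.1) X)
          {(0 : WithZero Γ)}) := by
  refine ⟨fun A hA B hB => ⟨?_, Kg_mul_mem hA hB⟩,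
    fun A hA B hB => KgAdd_eq_sAdd hA hB,
    fun A B h => Subtype.ext (by
      have : (KgToF Γ A).1 = (KgToF Γ B).1 := congrArg Subtype.val h
      exact this), rfl, rfl,
    fun l hl => ?_⟩
  · rw [KgAdd_eq_sAdd hA hB]; exact Kg_sAdd_mem hA hB
  · rwa [(Kg_foldr_eq l).1] at hl
end

section
/- If f : F → F' is a strict homomorphism of doubly-distributive hyperfields, then the induced map S(F) → S(F') sending A to f(A) = {f(a) : a ∈ A} is well defined (it sends finite hypersums to finite hypersums) and is a homomorphism of semirings. -/
open Set

lemma image_sAddOf {R S : Type*} {addR : R → R → Set R} {addS : S → S → Set S}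
    {f : R → S} (h : ∀ a b, f '' addR a b = addS (f a) (f b)) (A B : Set R) :
    f '' sAddOf addR A B = sAddOf addS (f '' A) (f '' B) := by
  ext s
  simp only [sAddOf, Set.mem_image, Set.mem_iUnion]
  constructor
  · rintro ⟨r, ⟨a, ha, b, hb, hr⟩, rfl⟩
    exact ⟨f a, ⟨a, ha, rfl⟩, f b, ⟨b, hb, rfl⟩, (h a b) ▸ ⟨r, hr, rfl⟩⟩
  · rintro ⟨_, ⟨a, ha, rfl⟩, _, ⟨b, hb, rfl⟩, hs⟩
    rw [← h a b] at hs
    obtain ⟨r, hr, rfl⟩ := hs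
    exact ⟨r, ⟨a, ha, b, hb, hr⟩, rfl⟩

/-- If `f : F → F'` is a strict homomorphism of doubly-distributive
hyperfields, then `A ↦ f(A)` sends finite hypersums to finite hypersums (so it gives a
well-defined map `S(F) → S(F')`), and this map is a homomorphism of semirings. -/
theorem strict_hom_induces_semiring_hom {R S : Type*}
    (F : Hyperfield R) (F' : Hyperfield S)
    (hF : F.DoublyDistributive) (hF' : F'.DoublyDistributive)
    (f : R → S)
    (hf : IsStrictHyperringHom F.add F.mul F.zero F.one
      F'.add F'.mul F'.zero F'.one f) :
    (∀ A ∈ sumSet F.add, f '' A ∈ sumSet F'.add) ∧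
    (f '' {F.zero} = {F'.zero}) ∧ (f '' {F.one} = {F'.one}) ∧
    (∀ A ∈ sumSet F.add, ∀ B ∈ sumSet F.add,
      f '' sAddOf F.add A B = sAddOf F'.add (f '' A) (f '' B)) ∧
    (∀ A ∈ sumSet F.add, ∀ B ∈ sumSet F.add,
      f '' Set.image2 F.mul A B = Set.image2 F'.mul (f '' A) (f '' B)) := by
  have hadd := image_sAddOf hf.map_add
  refine ⟨?_, ?_, ?_, fun A _ B _ => hadd A B, fun A _ B _ => ?_⟩
  · rintro A ⟨a, l, rfl⟩
    refine ⟨f a, l.map f, ?_⟩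
    induction l with
    | nil => simp [hf.map_zero]
    | cons x xs ih =>
      simp only [List.foldr, List.map_cons, hadd, ih, Set.image_singleton]
  · rw [Set.image_singleton, hf.map_zero]
  · rw [Set.image_singleton, hf.map_one]
  · rw [Set.image_image2]
    rw [Set.image2_image_left, Set.image2_image_right]
    exact Set.image2_congr fun a _ b _ => hf.map_mul a b
end

section
/- Let F be a doubly-distributive hyperfield. Then 𝓕̄(F) = (S(F); +, ×; ε, K₀) with ε = {-1}, 0 = {0}, 1 = {1}, and K₀ = {A ∈ S(F) : 0 ∈ A} is a fuzzy ring, and the inclusion S(F) ↪ 𝒫*(F) is an injective strong morphism of fuzzy rings 𝓕̄(F) → 𝓕(F) that restricts to a bijection on groups of units, each of which is identified with F^× via x ↦ {x}. -/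
open Set

section AuxHF


variable {R : Type*}

lemma hf_mem_sAddOf {add : R → R → Set R} {A B : Set R} {x : R} :
    x ∈ sAddOf add A B ↔ ∃ a ∈ A, ∃ b ∈ B, x ∈ add a b := by
  simp [sAddOf]

lemma sAddOf_singleton_singleton (add : R → R → Set R) (a b : R) :
    sAddOf add {a} {b} = add a b := by
  simp [sAddOf]

lemma sAddOf_singleton_left_eq (add : R → R → Set R) (x : R) (P : Set R) :
    sAddOf add {x} P = ⋃ t ∈ P, add x t := by
  simp [sAddOf]

variable (F : Hyperfield R)

lemma sAddOf_comm' (A B : Set R) : sAddOf F.add A B = sAddOf F.add B A := by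
  ext x
  simp only [hf_mem_sAddOf]
  constructor
  · rintro ⟨a, ha, b, hb, h⟩; exact ⟨b, hb, a, ha, F.isHyperring.add_comm a b ▸ h⟩
  · rintro ⟨a, ha, b, hb, h⟩; exact ⟨b, hb, a, ha, F.isHyperring.add_comm a b ▸ h⟩

lemma sAddOf_assoc' (A B C : Set R) :
    sAddOf F.add (sAddOf F.add A B) C = sAddOf F.add A (sAddOf F.add B C) := by
  ext x
  simp only [hf_mem_sAddOf]
  constructor
  · rintro ⟨s, ⟨a, ha, b, hb, hs⟩, c, hc, hx⟩
    have h1 : x ∈ sAddOf F.add (F.add a b) {c} :=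
      hf_mem_sAddOf.2 ⟨s, hs, c, rfl, hx⟩
    rw [F.isHyperring.add_assoc] at h1
    obtain ⟨a', ha', t, ht, hx'⟩ := hf_mem_sAddOf.1 h1
    rw [Set.mem_singleton_iff] at ha'
    subst ha'
    exact ⟨a', ha, t, ⟨b, hb, c, hc, ht⟩, hx'⟩
  · rintro ⟨a, ha, t, ⟨b, hb, c, hc, ht⟩, hx⟩
    have h1 : x ∈ sAddOf F.add {a} (F.add b c) :=
      hf_mem_sAddOf.2 ⟨a, rfl, t, ht, hx⟩
    rw [← F.isHyperring.add_assoc] at h1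
    obtain ⟨s, hs, c', hc', hx'⟩ := hf_mem_sAddOf.1 h1
    rw [Set.mem_singleton_iff] at hc'
    subst hc'
    exact ⟨s, ⟨a, ha, b, hb, hs⟩, c', hc, hx'⟩

lemma sAddOf_zero' (A : Set R) : sAddOf F.add A {F.zero} = A := by
  simp [sAddOf, F.isHyperring.add_zero]

lemma sAddOf_rearrange (A B C D : Set R) :
    sAddOf F.add (sAddOf F.add A B) (sAddOf F.add C D)
      = sAddOf F.add (sAddOf F.add A C) (sAddOf F.add B D) := by
  rw [sAddOf_assoc', ← sAddOf_assoc' F B C D, sAddOf_comm' F B C,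
    sAddOf_assoc' F C B D, ← sAddOf_assoc']

lemma hf_foldr_nonempty (l : List R) (a : R) :
    (l.foldr (fun x X => sAddOf F.add {x} X) ({a} : Set R)).Nonempty := by
  induction l with
  | nil => exact Set.singleton_nonempty a
  | cons x l ih =>
    obtain ⟨y, hy⟩ := ih
    obtain ⟨z, hz⟩ := F.isHyperring.add_nonempty x y
    exact ⟨z, hf_mem_sAddOf.2 ⟨x, rfl, y, hy, hz⟩⟩

lemma hf_sumSet_nonempty {A : Set R} (hA : A ∈ sumSet F.add) : A.Nonempty := by
  obtain ⟨a, l, rfl⟩ := hA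
  exact hf_foldr_nonempty F l a

lemma hf_singleton_mem_sumSet (x : R) : {x} ∈ sumSet F.add := ⟨x, [], rfl⟩

lemma sAddOf_foldr_left (l : List R) (a : R) (B : Set R) :
    sAddOf F.add (l.foldr (fun x X => sAddOf F.add {x} X) {a}) B
      = l.foldr (fun x X => sAddOf F.add {x} X) (sAddOf F.add {a} B) := by
  induction l with
  | nil => rfl
  | cons x l ih =>
    simp only [List.foldr_cons]
    rw [sAddOf_assoc', ih]

lemma sAddOf_mem_sumSet {A B : Set R} (hA : A ∈ sumSet F.add) (hB : B ∈ sumSet F.add) :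
    sAddOf F.add A B ∈ sumSet F.add := by
  obtain ⟨a, l, rfl⟩ := hA
  obtain ⟨b, m, rfl⟩ := hB
  refine ⟨b, l ++ a :: m, ?_⟩
  rw [List.foldr_append, sAddOf_foldr_left]
  rfl

lemma hf_neg_spec (a : R) : F.zero ∈ F.add a (F.toHyperring.neg a) :=
  (F.isHyperring.exists_neg a).exists.choose_spec

lemma hf_neg_unique {a b : R} (h : F.zero ∈ F.add a b) : b = F.toHyperring.neg a := by
  obtain ⟨b₀, hb₀, hu⟩ := F.isHyperring.exists_neg a
  exact (hu b h).trans (hu _ (hf_neg_spec F a)).symm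

lemma mul_neg' (a b : R) :
    F.mul a (F.toHyperring.neg b) = F.toHyperring.neg (F.mul a b) := by
  apply hf_neg_unique
  have h0 : F.mul a F.zero ∈ F.mul a '' F.add b (F.toHyperring.neg b) :=
    Set.mem_image_of_mem _ (hf_neg_spec F b)
  rw [F.isHyperring.distrib, F.isHyperring.mul_zero] at h0
  exact h0

lemma neg_neg' (a : R) : F.toHyperring.neg (F.toHyperring.neg a) = a := by
  refine (hf_neg_unique F ?_).symm
  rw [F.isHyperring.add_comm]
  exact hf_neg_spec F a

lemma neg_one_mul' (x : R) :
    F.mul (F.toHyperring.neg F.one) x = F.toHyperring.neg x := by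
  rw [F.isHyperring.mul_comm, mul_neg', F.isHyperring.mul_one]

lemma image2_mul_comm' (A B : Set R) :
    Set.image2 F.mul A B = Set.image2 F.mul B A :=
  Set.image2_comm F.isHyperring.mul_comm

lemma image2_mul_assoc' (A B C : Set R) :
    Set.image2 F.mul (Set.image2 F.mul A B) C
      = Set.image2 F.mul A (Set.image2 F.mul B C) :=
  Set.image2_assoc F.isHyperring.mul_assoc

lemma image2_mul_one' (A : Set R) : Set.image2 F.mul A {F.one} = A := by
  rw [Set.image2_singleton_right]
  simp only [F.isHyperring.mul_one, Set.image_id']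

lemma image2_zero_mul' {A : Set R} (hA : A.Nonempty) :
    Set.image2 F.mul {F.zero} A = {F.zero} := by
  rw [Set.image2_singleton_left]
  ext x
  simp only [Set.mem_image, Set.mem_singleton_iff]
  constructor
  · rintro ⟨a, _, rfl⟩
    rw [F.isHyperring.mul_comm, F.isHyperring.mul_zero]
  · rintro rfl
    obtain ⟨a, ha⟩ := hA
    exact ⟨a, ha, by rw [F.isHyperring.mul_comm, F.isHyperring.mul_zero]⟩

lemma image2_sAddOf_singleton (A B : Set R) (c : R) :
    Set.image2 F.mul (sAddOf F.add A B) {c}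
      = sAddOf F.add (Set.image2 F.mul A {c}) (Set.image2 F.mul B {c}) := by
  ext x
  simp only [Set.image2_singleton_right, Set.mem_image, hf_mem_sAddOf]
  constructor
  · rintro ⟨s, ⟨a, ha, b, hb, hs⟩, rfl⟩
    refine ⟨F.mul a c, ⟨a, ha, rfl⟩, F.mul b c, ⟨b, hb, rfl⟩, ?_⟩
    have hmem : F.mul c s ∈ F.mul c '' F.add a b := Set.mem_image_of_mem _ hs
    rw [F.isHyperring.distrib] at hmem
    rw [F.isHyperring.mul_comm s c, F.isHyperring.mul_comm a c, F.isHyperring.mul_comm b c]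
    exact hmem
  · rintro ⟨y, ⟨a, ha, rfl⟩, z, ⟨b, hb, rfl⟩, hx⟩
    rw [F.isHyperring.mul_comm a c, F.isHyperring.mul_comm b c,
      ← F.isHyperring.distrib] at hx
    obtain ⟨s, hs, rfl⟩ := hx
    exact ⟨s, ⟨a, ha, b, hb, hs⟩, F.isHyperring.mul_comm s c⟩

lemma sAddOf_biUnion_right (A : Set R) {P : Set R} (B : R → Set R) :
    sAddOf F.add A (⋃ t ∈ P, B t) = ⋃ t ∈ P, sAddOf F.add A (B t) := by
  ext x
  simp only [hf_mem_sAddOf, Set.mem_iUnion]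
  tauto

lemma image2_biUnion_left {P : Set R} (B : R → Set R) (C : Set R) :
    Set.image2 F.mul (⋃ t ∈ P, B t) C = ⋃ t ∈ P, Set.image2 F.mul (B t) C := by
  ext x
  simp only [Set.mem_image2, Set.mem_iUnion]
  tauto

lemma image2_eq_biUnion_left (P C : Set R) :
    Set.image2 F.mul P C = ⋃ t ∈ P, Set.image2 F.mul {t} C := by
  ext x
  simp only [Set.mem_image2, Set.mem_iUnion, Set.mem_singleton_iff]
  aesop

lemma image2_eq_biUnion_right (A C : Set R) :
    Set.image2 F.mul A C = ⋃ c ∈ C, Set.image2 F.mul A {c} := by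
  ext x
  simp only [Set.mem_image2, Set.mem_iUnion, Set.mem_singleton_iff]
  aesop

lemma sAddOf_biUnion_biUnion {B C : Set R} (X Y : R → Set R) :
    (⋃ b ∈ B, ⋃ c ∈ C, sAddOf F.add (X b) (Y c))
      = sAddOf F.add (⋃ b ∈ B, X b) (⋃ c ∈ C, Y c) := by
  ext x
  simp only [hf_mem_sAddOf, Set.mem_iUnion]
  tauto

lemma image2_sAddOf_expand (A B C : Set R) :
    Set.image2 F.mul A (sAddOf F.add B C)
      = ⋃ b ∈ B, ⋃ c ∈ C, Set.image2 F.mul A (F.add b c) := by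
  ext x
  simp only [Set.mem_image2, hf_mem_sAddOf, Set.mem_iUnion]
  tauto

lemma image2_foldr_add (hdd : F.DoublyDistributive) (l : List R) (a : R) (c d : R) :
    Set.image2 F.mul (l.foldr (fun x X => sAddOf F.add {x} X) {a}) (F.add c d)
      = sAddOf F.add
          (Set.image2 F.mul (l.foldr (fun x X => sAddOf F.add {x} X) {a}) {c})
          (Set.image2 F.mul (l.foldr (fun x X => sAddOf F.add {x} X) {a}) {d}) := by
  induction l with
  | nil =>
    simp only [List.foldr_nil]
    rw [Set.image2_singleton_left, F.isHyperring.distrib, Set.image2_singleton,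
      Set.image2_singleton, sAddOf_singleton_singleton]
  | cons x l ih =>
    simp only [List.foldr_cons]
    set P : Set R := l.foldr (fun x X => sAddOf F.add {x} X) {a} with hP
    calc Set.image2 F.mul (sAddOf F.add {x} P) (F.add c d)
        = ⋃ t ∈ P, Set.image2 F.mul (F.add x t) (F.add c d) := by
          rw [sAddOf_singleton_left_eq, image2_biUnion_left]
      _ = ⋃ t ∈ P, sAddOf F.add (F.add (F.mul x c) (F.mul x d))
            (Set.image2 F.mul {t} (F.add c d)) := by
          refine Set.iUnion_congr fun t => Set.iUnion_congr fun ht => ?_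
          rw [hdd x t c d, sAddOf_assoc', sAddOf_singleton_singleton,
            Set.image2_singleton_left, F.isHyperring.distrib]
      _ = sAddOf F.add (F.add (F.mul x c) (F.mul x d))
            (⋃ t ∈ P, Set.image2 F.mul {t} (F.add c d)) := by
          rw [sAddOf_biUnion_right]
      _ = sAddOf F.add (F.add (F.mul x c) (F.mul x d))
            (Set.image2 F.mul P (F.add c d)) := by
          rw [← image2_eq_biUnion_left]
      _ = sAddOf F.add (F.add (F.mul x c) (F.mul x d))
            (sAddOf F.add (Set.image2 F.mul P {c}) (Set.image2 F.mul P {d})) := by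
          rw [ih]
      _ = sAddOf F.add (sAddOf F.add {F.mul x c} (Set.image2 F.mul P {c}))
            (sAddOf F.add {F.mul x d} (Set.image2 F.mul P {d})) := by
          rw [← sAddOf_singleton_singleton F.add (F.mul x c) (F.mul x d),
            sAddOf_rearrange]
      _ = sAddOf F.add (Set.image2 F.mul (sAddOf F.add {x} P) {c})
            (Set.image2 F.mul (sAddOf F.add {x} P) {d}) := by
          rw [image2_sAddOf_singleton, image2_sAddOf_singleton,
            Set.image2_singleton, Set.image2_singleton]

lemma image2_sAddOf_left (hdd : F.DoublyDistributive) {A : Set R}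
    (hA : A ∈ sumSet F.add) (B C : Set R) :
    Set.image2 F.mul A (sAddOf F.add B C)
      = sAddOf F.add (Set.image2 F.mul A B) (Set.image2 F.mul A C) := by
  obtain ⟨a, l, rfl⟩ := hA
  rw [image2_sAddOf_expand]
  calc (⋃ b ∈ B, ⋃ c ∈ C,
          Set.image2 F.mul (l.foldr (fun x X => sAddOf F.add {x} X) {a}) (F.add b c))
      = ⋃ b ∈ B, ⋃ c ∈ C, sAddOf F.add
          (Set.image2 F.mul (l.foldr (fun x X => sAddOf F.add {x} X) {a}) {b})
          (Set.image2 F.mul (l.foldr (fun x X => sAddOf F.add {x} X) {a}) {c}) := by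
        refine Set.iUnion_congr fun b => Set.iUnion_congr fun hb => ?_
        refine Set.iUnion_congr fun c => Set.iUnion_congr fun hc => ?_
        exact image2_foldr_add F hdd l a b c
    _ = sAddOf F.add
          (⋃ b ∈ B, Set.image2 F.mul (l.foldr (fun x X => sAddOf F.add {x} X) {a}) {b})
          (⋃ c ∈ C, Set.image2 F.mul (l.foldr (fun x X => sAddOf F.add {x} X) {a}) {c}) := by
        rw [sAddOf_biUnion_biUnion]
    _ = sAddOf F.add
          (Set.image2 F.mul (l.foldr (fun x X => sAddOf F.add {x} X) {a}) B)
          (Set.image2 F.mul (l.foldr (fun x X => sAddOf F.add {x} X) {a}) C) := by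
        rw [← image2_eq_biUnion_right, ← image2_eq_biUnion_right]

lemma image2_hf_singleton_mem_sumSet {A : Set R} (hA : A ∈ sumSet F.add) (b : R) :
    Set.image2 F.mul A {b} ∈ sumSet F.add := by
  obtain ⟨a, l, rfl⟩ := hA
  induction l with
  | nil =>
    simp only [List.foldr_nil]
    rw [Set.image2_singleton]
    exact hf_singleton_mem_sumSet F _
  | cons x l ih =>
    simp only [List.foldr_cons]
    rw [image2_sAddOf_singleton]
    refine sAddOf_mem_sumSet F ?_ ih
    rw [Set.image2_singleton]
    exact hf_singleton_mem_sumSet F _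

lemma image2_mem_sumSet (hdd : F.DoublyDistributive) {A B : Set R}
    (hA : A ∈ sumSet F.add) (hB : B ∈ sumSet F.add) :
    Set.image2 F.mul A B ∈ sumSet F.add := by
  obtain ⟨b, m, rfl⟩ := hB
  induction m with
  | nil => exact image2_hf_singleton_mem_sumSet F hA b
  | cons c m ih =>
    simp only [List.foldr_cons]
    rw [image2_sAddOf_left F hdd hA]
    exact sAddOf_mem_sumSet F (image2_hf_singleton_mem_sumSet F hA c) ih

lemma eq_singleton_of_image2_eq_one {A B : Set R} (hA : A.Nonempty) (hB : B.Nonempty)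
    (h : Set.image2 F.mul A B = {F.one}) : ∃ x, x ≠ F.zero ∧ A = {x} := by
  obtain ⟨b, hb⟩ := hB
  obtain ⟨a₀, ha₀⟩ := hA
  have hab : ∀ a ∈ A, F.mul a b = F.one := by
    intro a ha
    have : F.mul a b ∈ Set.image2 F.mul A B := Set.mem_image2_of_mem ha hb
    rwa [h, Set.mem_singleton_iff] at this
  have hbne : b ≠ F.zero := by
    intro hb0
    have := hab a₀ ha₀
    rw [hb0, F.isHyperring.mul_zero] at this
    exact F.one_ne_zero this.symm
  obtain ⟨c, hc⟩ := F.inv b hbne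
  have key : ∀ a ∈ A, a = c := by
    intro a ha
    have h1 : F.mul (F.mul a b) c = c := by
      rw [hab a ha, F.isHyperring.mul_comm, F.isHyperring.mul_one]
    rwa [F.isHyperring.mul_assoc, hc, F.isHyperring.mul_one] at h1
  have hcne : c ≠ F.zero := by
    intro h0
    rw [h0, F.isHyperring.mul_zero] at hc
    exact F.one_ne_zero hc.symm
  refine ⟨c, hcne, ?_⟩
  ext y
  simp only [Set.mem_singleton_iff]
  constructor
  · exact key y
  · rintro rfl
    exact key a₀ ha₀ ▸ ha₀


end AuxHF

/-- For a doubly-distributive hyperfield `F`, the set `S(F)` of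
finite hypersums, with subset addition and multiplication, `ε = {-1}`, `0 = {0}`,
`1 = {1}` and null elements the members containing `0`, is a fuzzy ring `𝓕̄(F)`
(all axioms (FR0)–(FR7) hold within `S(F)`), and the inclusion `S(F) ↪ 𝒫*(F)` is an
injective strong morphism `𝓕̄(F) → 𝓕(F)` restricting to a bijection on units, each
group of units being identified with `F^×` via `x ↦ {x}`. -/
theorem reduced_fuzzy_isFuzzyRing {R : Type*} (F : Hyperfield R)
    (hdd : F.DoublyDistributive) :
    -- S(F) consists of nonempty subsets (so it embeds into 𝓕(F))
    (∀ A ∈ sumSet F.add, A.Nonempty) ∧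
    -- closure under the operations
    (∀ A ∈ sumSet F.add, ∀ B ∈ sumSet F.add, sAddOf F.add A B ∈ sumSet F.add) ∧
    (∀ A ∈ sumSet F.add, ∀ B ∈ sumSet F.add, Set.image2 F.mul A B ∈ sumSet F.add) ∧
    ({F.zero} ∈ sumSet F.add) ∧ ({F.one} ∈ sumSet F.add) ∧
    ({F.toHyperring.neg F.one} ∈ sumSet F.add) ∧
    -- (FR0): commutative monoid axioms
    (∀ A ∈ sumSet F.add, ∀ B ∈ sumSet F.add, sAddOf F.add A B = sAddOf F.add B A) ∧
    (∀ A ∈ sumSet F.add, ∀ B ∈ sumSet F.add, ∀ C ∈ sumSet F.add,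
      sAddOf F.add (sAddOf F.add A B) C = sAddOf F.add A (sAddOf F.add B C)) ∧
    (∀ A ∈ sumSet F.add, sAddOf F.add A {F.zero} = A) ∧
    (∀ A ∈ sumSet F.add, ∀ B ∈ sumSet F.add,
      Set.image2 F.mul A B = Set.image2 F.mul B A) ∧
    (∀ A ∈ sumSet F.add, ∀ B ∈ sumSet F.add, ∀ C ∈ sumSet F.add,
      Set.image2 F.mul (Set.image2 F.mul A B) C
        = Set.image2 F.mul A (Set.image2 F.mul B C)) ∧
    (∀ A ∈ sumSet F.add, Set.image2 F.mul A {F.one} = A) ∧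
    -- (FR1): 0 is absorbing
    (∀ A ∈ sumSet F.add, Set.image2 F.mul {F.zero} A = {F.zero}) ∧
    -- (FR2): units distribute over addition
    (∀ A ∈ sumSet F.add, ∀ B ∈ sumSet F.add, ∀ C ∈ sumSet F.add,
      (∃ A' ∈ sumSet F.add, Set.image2 F.mul A A' = {F.one}) →
      Set.image2 F.mul A (sAddOf F.add B C)
        = sAddOf F.add (Set.image2 F.mul A B) (Set.image2 F.mul A C)) ∧
    -- (FR3): ε² = 1
    (Set.image2 F.mul {F.toHyperring.neg F.one} {F.toHyperring.neg F.one}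
      = ({F.one} : Set R)) ∧
    -- (FR4): null elements form a proper ideal
    (∀ A ∈ sumSet F.add, ∀ B ∈ sumSet F.add,
      F.zero ∈ A → F.zero ∈ B → F.zero ∈ sAddOf F.add A B) ∧
    (∀ A ∈ sumSet F.add, ∀ B ∈ sumSet F.add,
      F.zero ∈ B → F.zero ∈ Set.image2 F.mul A B) ∧
    (F.zero ∉ ({F.one} : Set R)) ∧
    -- (FR5)
    (∀ A ∈ sumSet F.add, (∃ A' ∈ sumSet F.add, Set.image2 F.mul A A' = {F.one}) →
      (F.zero ∈ sAddOf F.add {F.one} A ↔ A = {F.toHyperring.neg F.one})) ∧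
    -- (FR6)
    (∀ A ∈ sumSet F.add, ∀ B ∈ sumSet F.add, ∀ C ∈ sumSet F.add, ∀ D ∈ sumSet F.add,
      F.zero ∈ sAddOf F.add A B → F.zero ∈ sAddOf F.add C D →
      F.zero ∈ sAddOf F.add (Set.image2 F.mul A C)
        (Set.image2 F.mul {F.toHyperring.neg F.one} (Set.image2 F.mul B D))) ∧
    -- (FR7)
    (∀ A ∈ sumSet F.add, ∀ B ∈ sumSet F.add, ∀ C ∈ sumSet F.add, ∀ D ∈ sumSet F.add,
      F.zero ∈ sAddOf F.add A (Set.image2 F.mul B (sAddOf F.add C D)) →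
      F.zero ∈ sAddOf F.add (sAddOf F.add A (Set.image2 F.mul B C))
        (Set.image2 F.mul B D)) ∧
    -- the inclusion 𝓕̄(F) ↪ 𝓕(F) restricts to a bijection on units, and the units
    -- of both fuzzy rings are identified with F^× via x ↦ {x}
    (∀ A ∈ sumSet F.add,
      ((∃ B ∈ sumSet F.add, Set.image2 F.mul A B = {F.one}) ↔
        (∃ B : Set R, B.Nonempty ∧ Set.image2 F.mul A B = {F.one}))) ∧
    (∀ A ∈ sumSet F.add,
      ((∃ B ∈ sumSet F.add, Set.image2 F.mul A B = {F.one}) ↔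
        ∃ x : R, x ≠ F.zero ∧ A = {x})) := by
  refine ⟨fun A hA => hf_sumSet_nonempty F hA,
    fun A hA B hB => sAddOf_mem_sumSet F hA hB,
    fun A hA B hB => image2_mem_sumSet F hdd hA hB,
    hf_singleton_mem_sumSet F _, hf_singleton_mem_sumSet F _, hf_singleton_mem_sumSet F _,
    fun A _ B _ => sAddOf_comm' F A B,
    fun A _ B _ C _ => sAddOf_assoc' F A B C,
    fun A _ => sAddOf_zero' F A,
    fun A _ B _ => image2_mul_comm' F A B,
    fun A _ B _ C _ => image2_mul_assoc' F A B C,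
    fun A _ => image2_mul_one' F A,
    fun A hA => image2_zero_mul' F (hf_sumSet_nonempty F hA),
    fun A hA B _ C _ _ => image2_sAddOf_left F hdd hA B C,
    ?_, ?_, ?_, ?_, ?_, ?_, ?_, ?_, ?_⟩
  -- FR3
  · rw [Set.image2_singleton, neg_one_mul' F, neg_neg' F]
  -- null + null
  · intro A _ B _ h0A h0B
    refine hf_mem_sAddOf.2 ⟨F.zero, h0A, F.zero, h0B, ?_⟩
    rw [F.isHyperring.add_zero]
    rfl
  -- mul null
  · intro A hA B _ h0B
    obtain ⟨a, ha⟩ := hf_sumSet_nonempty F hA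
    have := Set.mem_image2_of_mem (f := F.mul) ha h0B
    rwa [F.isHyperring.mul_zero] at this
  -- 1 not null
  · intro h
    exact F.one_ne_zero (Set.mem_singleton_iff.1 h).symm
  -- FR5
  · intro A hA hu
    obtain ⟨A', hA', hAA'⟩ := hu
    obtain ⟨x, hxne, rfl⟩ := eq_singleton_of_image2_eq_one F
      (hf_sumSet_nonempty F hA) (hf_sumSet_nonempty F hA') hAA'
    constructor
    · intro h0
      obtain ⟨u, hu', v, hv, h⟩ := hf_mem_sAddOf.1 h0
      rw [Set.mem_singleton_iff] at hu' hv
      subst hu' hv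
      rw [hf_neg_unique F h]
    · intro hEq
      rw [hEq, sAddOf_singleton_singleton]
      exact hf_neg_spec F F.one
  -- FR6
  · intro A _ B _ C _ D _ h1 h2
    obtain ⟨a, ha, b, hb, hab⟩ := hf_mem_sAddOf.1 h1
    obtain ⟨c, hc, d, hd, hcd⟩ := hf_mem_sAddOf.1 h2
    obtain rfl : b = F.toHyperring.neg a := hf_neg_unique F hab
    obtain rfl : d = F.toHyperring.neg c := hf_neg_unique F hcd
    have key : F.mul (F.toHyperring.neg F.one)
        (F.mul (F.toHyperring.neg a) (F.toHyperring.neg c)) = F.toHyperring.neg (F.mul a c) := by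
      rw [neg_one_mul' F, mul_neg' F, neg_neg' F, F.isHyperring.mul_comm,
        mul_neg' F, F.isHyperring.mul_comm c a]
    refine hf_mem_sAddOf.2 ⟨F.mul a c, Set.mem_image2_of_mem ha hc,
      F.mul (F.toHyperring.neg F.one) (F.mul (F.toHyperring.neg a) (F.toHyperring.neg c)),
      Set.mem_image2_of_mem rfl (Set.mem_image2_of_mem hb hd), ?_⟩
    rw [key]
    exact hf_neg_spec F (F.mul a c)
  -- FR7
  · intro A _ B hB C _ D _ h
    rw [image2_sAddOf_left F hdd hB, ← sAddOf_assoc'] at h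
    exact h
  -- units iff nonempty inverse
  · intro A hA
    constructor
    · rintro ⟨B, hB, h⟩
      exact ⟨B, hf_sumSet_nonempty F hB, h⟩
    · rintro ⟨B, hBne, h⟩
      obtain ⟨x, hxne, rfl⟩ := eq_singleton_of_image2_eq_one F
        (hf_sumSet_nonempty F hA) hBne h
      obtain ⟨y, hy⟩ := F.inv x hxne
      exact ⟨{y}, hf_singleton_mem_sumSet F y, by rw [Set.image2_singleton, hy]⟩
  -- units iff singleton
  · intro A hA
    constructor
    · rintro ⟨B, hB, h⟩
      exact eq_singleton_of_image2_eq_one F (hf_sumSet_nonempty F hA)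
        (hf_sumSet_nonempty F hB) h
    · rintro ⟨x, hxne, rfl⟩
      obtain ⟨y, hy⟩ := F.inv x hxne
      exact ⟨{y}, hf_singleton_mem_sumSet F y, by rw [Set.image2_singleton, hy]⟩
end
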